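/- Let a, b be nonzero complex numbers with 0 < |a| ≤ |b|, and let c = (|a|/|b|)·b. Let χ be the concatenation of the shorter circular arc on the circle of radius |a| centered at 0 from a to c, followed by the radial segment [c, b]. Then the Euclidean length of χ satisfies |a - b| ≤ ℓ(χ) ≤ 3|a - b|. Moreover, if |b| ≤ e|a|, then ℓ(χ) ≤ 2e|a|. -/

import Mathlib

open Real

set_option maxHeartbeats 1000000 in
/-- The length of the circular-arc-segment path `χ_{ab}` from `a` along the shorter arc
of the circle of radius `|a|` to `c = (|a|/|b|)·b`, followed by the radial segment `[c,b]`: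
the arc has length `|a|·θ` with `θ = |Arg (b/a)|`, and the segment has length `|b| - |a|`. -/
theorem length_circular_arc_segment_path (a b : ℂ)
    (ha : 0 < ‖a‖) (hab : ‖a‖ ≤ ‖b‖) :
    ‖a - b‖ ≤
        ‖a‖ * |Complex.arg (b / a)| + (‖b‖ - ‖a‖) ∧
    ‖a‖ * |Complex.arg (b / a)| + (‖b‖ - ‖a‖) ≤
        3 * ‖a - b‖ ∧
    (‖b‖ ≤ Real.exp 1 * ‖a‖ →
      ‖a‖ * |Complex.arg (b / a)| + (‖b‖ - ‖a‖) ≤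
        2 * Real.exp 1 * ‖a‖) := by
  have ha0 : a ≠ 0 := by
    intro h; simp [h] at ha
  have hb0 : b ≠ 0 := by
    intro h; simp [h] at hab; exact ha0 hab
  set r := ‖a‖ with hr
  set R := ‖b‖ with hR
  have hr0 : r ≠ 0 := ha.ne'
  have hR0 : R ≠ 0 := (lt_of_lt_of_le ha hab).ne'
  set z : ℂ := b / a with hz
  have hz0 : z ≠ 0 := div_ne_zero hb0 ha0
  set t := |Complex.arg z| with ht
  have ht0 : 0 ≤ t := abs_nonneg _
  have htpi : t ≤ π := Complex.abs_arg_le_pi z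
  -- cos of the angle
  set c : ℝ := Real.cos t with hc
  have hzabs : ‖z‖ = R / r := by
    rw [hz, norm_div]
  have habsne : ‖z‖ ≠ 0 := by
    simpa using hz0
  have hzre : z.re = (R / r) * c := by
    have h := Complex.cos_arg hz0
    rw [← Real.cos_abs z.arg] at h
    rw [hc, ht, h, hzabs]
    field_simp
  have habsz : z.re ^ 2 + z.im ^ 2 = (R / r) ^ 2 := by
    rw [← hzabs, Complex.sq_norm, Complex.normSq_apply]
    ring
  set s := ‖a - b‖ with hs
  have hs0 : 0 ≤ s := norm_nonneg _
  have hab' : a - b = a * (1 - z) := by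
    rw [hz, mul_sub, mul_one, mul_div_assoc', mul_div_cancel_left₀ b ha0]
  have hs2 : s ^ 2 = r ^ 2 + R ^ 2 - 2 * r * R * c := by
    rw [hs, hab', norm_mul, mul_pow, Complex.sq_norm (1 - z)]
    have : Complex.normSq (1 - z) = 1 - 2 * z.re + ((R / r) ^ 2) := by
      rw [← habsz, Complex.normSq_apply]
      simp [Complex.sub_re, Complex.sub_im]
      ring
    rw [this, hzre, ← hr]
    field_simp
    ring
  have hc1 : c ≤ 1 := Real.cos_le_one t
  have hcm1 : -1 ≤ c := Real.neg_one_le_cos t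
  have hcub : 1 - t ^ 2 / 2 ≤ c := Real.one_sub_sq_div_two_le_cos
  have hclb : c ≤ 1 - 2 / π ^ 2 * t ^ 2 := by
    apply Real.cos_le_one_sub_mul_cos_sq
    rw [abs_of_nonneg ht0]; exact htpi
  have hpi : (3.141592 : ℝ) < π ∧ π < 3.15 := ⟨by
    have := Real.pi_gt_d6; linarith, Real.pi_lt_d2⟩
  -- 1 - c ≤ t
  have h1ct : 1 - c ≤ t := by
    rcases le_or_gt t 2 with h | h
    · nlinarith
    · nlinarith
  -- useful nonneg facts
  have hu : 0 ≤ 1 - c := by linarith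
  have hRr : 0 ≤ R - r := by linarith
  have hpi2 : π ^ 2 ≤ 16 := by nlinarith [hpi.2, Real.pi_pos]
  have hπ2 : (0:ℝ) < π ^ 2 := by positivity
  -- R - r ≤ s
  have hRrs : R - r ≤ s := by
    have hx : 0 ≤ (1 - c) * (r * R) :=
      mul_nonneg hu (mul_nonneg ha.le (by linarith))
    have hid : s ^ 2 - (R - r) ^ 2 = 2 * ((1 - c) * (r * R)) := by rw [hs2]; ring
    have h2 : (R - r) ^ 2 ≤ s ^ 2 := by linarith
    exact le_of_pow_le_pow_left₀ two_ne_zero hs0 h2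
  -- r * t ≤ 2 * s
  have h1c' : 2 * t ^ 2 ≤ (1 - c) * π ^ 2 := by
    have key : 2 / π ^ 2 * t ^ 2 * π ^ 2 = 2 * t ^ 2 := by field_simp
    have h := mul_le_mul_of_nonneg_right (by linarith [hclb] : 2 / π ^ 2 * t ^ 2 ≤ 1 - c) hπ2.le
    linarith [key ▸ h]
  have h6 : 2 * (1 - c) * (r * r) ≤ s ^ 2 := by
    have hx : 0 ≤ (1 - c) * (r * (R - r)) :=
      mul_nonneg hu (mul_nonneg ha.le hRr)
    have hid : s ^ 2 - 2 * (1 - c) * (r * r) =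
        (R - r) ^ 2 + 2 * ((1 - c) * (r * (R - r))) := by rw [hs2]; ring
    linarith [sq_nonneg (R - r)]
  have hrt2s : r * t ≤ 2 * s := by
    have hA : 4 * t ^ 2 * (r * r) ≤ π ^ 2 * s ^ 2 := by
      have m1 := mul_le_mul_of_nonneg_right h1c' (mul_nonneg ha.le ha.le)
      have m2 := mul_le_mul_of_nonneg_left h6 hπ2.le
      linarith [m1, m2]
    have hB : 0 ≤ (16 - π ^ 2) * s ^ 2 := mul_nonneg (by linarith) (sq_nonneg s)
    have h2 : (r * t) ^ 2 ≤ (2 * s) ^ 2 := by linarith [hA, hB]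
    exact le_of_pow_le_pow_left₀ two_ne_zero (by linarith) h2
  refine ⟨?_, by linarith, ?_⟩
  · -- s ≤ r * t + (R - r)
    have hrhs : 0 ≤ r * t + (R - r) := by positivity
    have hx1 : 0 ≤ r * (R - r) * (t - (1 - c)) :=
      mul_nonneg (mul_nonneg ha.le hRr) (by linarith)
    have hx2 : 0 ≤ r * r * (t ^ 2 / 2 - (1 - c)) :=
      mul_nonneg (mul_nonneg ha.le ha.le) (by linarith)
    have hid : (r * t + (R - r)) ^ 2 - s ^ 2 =
        2 * (r * (R - r) * (t - (1 - c))) + 2 * (r * r * (t ^ 2 / 2 - (1 - c))) := by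
      rw [hs2]; ring
    have h2 : s ^ 2 ≤ (r * t + (R - r)) ^ 2 := by linarith
    exact le_of_pow_le_pow_left₀ two_ne_zero hrhs h2
  · intro hbe
    have he : (2.7182818283 : ℝ) < Real.exp 1 := Real.exp_one_gt_d9
    have hT : r * t ≤ r * 3.15 := mul_le_mul_of_nonneg_left (htpi.trans hpi.2.le) ha.le
    have hE : 0 ≤ (Real.exp 1 + 1 - 3.15) * r := mul_nonneg (by linarith) ha.le
    nlinarith [hT, hE, hbe]
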